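/- Equality case of the impurity gain for strictly concave impurity: assume additionally that f is strictly concave on the simplex, i.e., f(λ•a + (1−λ)•b) > λ·f(a) + (1−λ)·f(b) whenever a ≠ b in Δ_N and λ ∈ (0,1). If b, c : Fin N → ℝ are componentwise nonnegative with ∑ n, b n > 0 and ∑ n, c n > 0, then F(b + c) = F(b) + F(c) if and only if the normalized vectors coincide: (fun n => b n / ∑ m, b m) = (fun n => c n / ∑ m, c m); otherwise F(b + c) > F(b) + F(c). -/

import Mathlib

def simplex (N : ℕ) : Set (Fin N → ℝ) := {q | (∀ n, 0 ≤ q n) ∧ ∑ n, q n = 1}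

/-- `f` is concave on the standard probability simplex. -/
def ConcaveOnSimplex {N : ℕ} (f : (Fin N → ℝ) → ℝ) : Prop :=
  ∀ a ∈ simplex N, ∀ b ∈ simplex N, ∀ lam : ℝ, lam ∈ Set.Icc (0:ℝ) 1 →
    lam * f a + (1 - lam) * f b ≤ f (lam • a + (1 - lam) • b)

/-- The impurity functional `F(v) = (∑ n, v n) * f (v / ∑ n, v n)`. -/
noncomputable def impurity {N : ℕ} (f : (Fin N → ℝ) → ℝ) (v : Fin N → ℝ) : ℝ :=
  (∑ n, v n) * f (fun n => v n / ∑ m, v m)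

/-- Equality case of the impurity gain for strictly concave impurity. -/
theorem stmt_16 {N : ℕ} (hN : 1 ≤ N) (f : (Fin N → ℝ) → ℝ) (hf : ConcaveOnSimplex f)
    (hfs : ∀ a ∈ simplex N, ∀ b ∈ simplex N, a ≠ b → ∀ lam ∈ Set.Ioo (0:ℝ) 1,
      lam * f a + (1 - lam) * f b < f (lam • a + (1 - lam) • b))
    (b c : Fin N → ℝ) (hb : ∀ n, 0 ≤ b n) (hc : ∀ n, 0 ≤ c n)
    (hbs : 0 < ∑ n, b n) (hcs : 0 < ∑ n, c n) :
    (impurity f (b + c) = impurity f b + impurity f c ↔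
      (fun n => b n / ∑ m, b m) = (fun n => c n / ∑ m, c m)) ∧
    ((fun n => b n / ∑ m, b m) ≠ (fun n => c n / ∑ m, c m) →
      impurity f b + impurity f c < impurity f (b + c)) := by
  set S : ℝ := ∑ n, b n with hS
  set T : ℝ := ∑ n, c n with hT
  have hST : 0 < S + T := by linarith
  have hsum : ∑ n, (b + c) n = S + T := by
    simp [Finset.sum_add_distrib, hS, hT]
  set p : Fin N → ℝ := fun n => b n / S with hp
  set q : Fin N → ℝ := fun n => c n / T with hq
  have hpS : p ∈ simplex N := by
    refine ⟨fun n => div_nonneg (hb n) hbs.le, ?_⟩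
    rw [hp, ← Finset.sum_div, ← hS, div_self hbs.ne']
  have hqS : q ∈ simplex N := by
    refine ⟨fun n => div_nonneg (hc n) hcs.le, ?_⟩
    rw [hq, ← Finset.sum_div, ← hT, div_self hcs.ne']
  set lam : ℝ := S / (S + T) with hlam
  have hlam0 : 0 < lam := div_pos hbs hST
  have hlam1 : lam < 1 := by
    rw [hlam, div_lt_one hST]; linarith
  have hsum' : ∑ m, (b m + c m) = S + T := by
    simpa using hsum
  have hcomb : (fun n => (b + c) n / (S + T)) = lam • p + (1 - lam) • q := by
    funext n
    simp only [Pi.add_apply, Pi.smul_apply, smul_eq_mul, hlam, hp, hq]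
    field_simp
    ring
  have hIbc : impurity f (b + c) = (S + T) * f (lam • p + (1 - lam) • q) := by
    rw [impurity, hsum, hcomb]
  have h1 : (S + T) * lam = S := by
    rw [hlam]; field_simp
  have h2 : (S + T) * (1 - lam) = T := by
    rw [hlam]; field_simp; ring
  have hIb : impurity f b + impurity f c
      = (S + T) * (lam * f p + (1 - lam) * f q) := by
    rw [impurity, impurity, ← hS, ← hT, ← hp, ← hq]
    linear_combination (f p) * h1.symm + (f q) * h2.symm
  constructor
  · constructor
    · intro heq
      by_contra hne
      have hlt := hfs p hpS q hqS hne lam ⟨hlam0, hlam1⟩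
      rw [hIbc, hIb] at heq
      have := mul_lt_mul_of_pos_left hlt hST
      linarith
    · intro heq
      have hpq : p = q := heq
      rw [hIbc, hIb, hpq]
      have hcq : lam • q + (1 - lam) • q = q := by
        rw [← add_smul]; ring_nf; simp
      rw [hcq]; ring
  · intro hne
    have hne' : p ≠ q := hne
    have hlt := hfs p hpS q hqS hne' lam ⟨hlam0, hlam1⟩
    rw [hIbc, hIb]
    exact mul_lt_mul_of_pos_left hlt hST
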